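/- Matrix Ansatz (Derrida–Evans–Hakim–Pasquier): Suppose D and E are (possibly infinite) matrices, ⟨W| a row vector, |V⟩ a column vector, and c ≠ 0 a constant satisfying DE − qED = c(D+E), βD|V⟩ = c|V⟩, and α⟨W|E = c⟨W|, with ⟨W|(D+E)^n|V⟩ ≠ 0. Then for the open-boundary ASEP on n sites, the assignment π(τ) = ⟨W| ∏_{i=1}^n (τ_i D + (1−τ_i)E) |V⟩ / ⟨W|(D+E)^n|V⟩ (identifying τ ∈ {0,1}^n with a particle configuration) defines the stationary distribution: it satisfies the global balance equations of the chain. -/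

import Mathlib

open Finset

section AuxCombinatorics

private lemma upd2_mp {m : ℕ} {a b : Fin m} (hab : a ≠ b) {τ σ : Fin m → Bool} {x y : Bool}
    (h1 : σ a = !x) (h2 : σ b = !y)
    (h3 : τ = Function.update (Function.update σ a x) b y) :
    τ a = x ∧ τ b = y ∧ σ = Function.update (Function.update τ a (!x)) b (!y) := by
  subst h3
  refine ⟨?_, ?_, ?_⟩
  · rw [Function.update_of_ne hab, Function.update_self]
  · rw [Function.update_self]
  · funext j
    rcases eq_or_ne j b with rfl | hjb
    · simp [h2]
    · rcases eq_or_ne j a with rfl | hja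
      · simp [Function.update_apply, hab, hjb, h1]
      · simp [Function.update_apply, hja, hjb]

private lemma upd2_iff {m : ℕ} {a b : Fin m} (hab : a ≠ b) (τ σ : Fin m → Bool) (x y : Bool) :
    (σ a = !x ∧ σ b = !y ∧ τ = Function.update (Function.update σ a x) b y) ↔
    (τ a = x ∧ τ b = y ∧ σ = Function.update (Function.update τ a (!x)) b (!y)) := by
  constructor
  · rintro ⟨h1, h2, h3⟩; exact upd2_mp hab h1 h2 h3
  · rintro ⟨h1, h2, h3⟩
    have := upd2_mp hab (x := !x) (y := !y) (by simp [h1]) (by simp [h2]) h3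
    simpa using this

private lemma upd1_mp {m : ℕ} {j : Fin m} {τ σ : Fin m → Bool} {x : Bool}
    (h1 : σ j = !x) (h3 : τ = Function.update σ j x) :
    τ j = x ∧ σ = Function.update τ j (!x) := by
  subst h3
  refine ⟨Function.update_self _ _ _, ?_⟩
  funext k
  rcases eq_or_ne k j with rfl | hkj
  · simp [h1]
  · simp [Function.update_apply, hkj]

private lemma upd1_iff {m : ℕ} (j : Fin m) (τ σ : Fin m → Bool) (x : Bool) :
    (σ j = !x ∧ τ = Function.update σ j x) ↔ (τ j = x ∧ σ = Function.update τ j (!x)) := by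
  constructor
  · rintro ⟨h1, h3⟩; exact upd1_mp h1 h3
  · rintro ⟨h1, h3⟩
    have := upd1_mp (x := !x) (by simp [h1]) h3
    simpa using this

private lemma ofFn_decomp_one {X : Type*} {m : ℕ} (g : Fin m → X) (i : ℕ) (h : i < m) :
    List.ofFn g = (List.ofFn g).take i ++ g ⟨i, h⟩ :: (List.ofFn g).drop (i + 1) := by
  conv_lhs => rw [← List.take_append_drop i (List.ofFn g)]
  congr 1
  rw [List.drop_eq_getElem_cons (by simpa using h), List.getElem_ofFn]

private lemma drop_succ_decomp {X : Type*} {m : ℕ} (g : Fin m → X) (i : ℕ) (h : i + 1 < m) :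
    (List.ofFn g).drop (i + 1) = g ⟨i + 1, h⟩ :: (List.ofFn g).drop (i + 2) := by
  rw [List.drop_eq_getElem_cons (by simpa using h), List.getElem_ofFn]

private lemma take_ofFn_congr {X : Type*} {m : ℕ} (g h : Fin m → X) (i : ℕ)
    (H : ∀ (k : ℕ) (hk : k < m), k < i → g ⟨k, hk⟩ = h ⟨k, hk⟩) :
    (List.ofFn g).take i = (List.ofFn h).take i := by
  apply List.ext_getElem
  · simp
  · intro k h1 h2
    have hk : k < m := by simp at h1; omega
    have hki : k < i := by simp at h1; omega
    rw [List.getElem_take, List.getElem_take, List.getElem_ofFn, List.getElem_ofFn]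
    exact H k hk hki

private lemma drop_ofFn_congr {X : Type*} {m : ℕ} (g h : Fin m → X) (i : ℕ)
    (H : ∀ (k : ℕ) (hk : k < m), i ≤ k → g ⟨k, hk⟩ = h ⟨k, hk⟩) :
    (List.ofFn g).drop i = (List.ofFn h).drop i := by
  apply List.ext_getElem
  · simp
  · intro k h1 h2
    rw [List.getElem_drop, List.getElem_drop, List.getElem_ofFn, List.getElem_ofFn]
    exact H (i + k) (by simp at h1; omega) (by omega)

private lemma take_succ_eq {X : Type*} (l : List X) (i : ℕ) (h : i < l.length) :
    l.take (i + 1) = l.take i ++ [l[i]] := by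
  rw [← List.take_concat_get h, List.concat_eq_append]

private lemma sum_ite_cfg {X : Type*} [Fintype X] [DecidableEq X]
    (P Q : Prop) [Decidable P] [Decidable Q] (σ₀ : X) (g : X → ℝ) :
    (∑ σ : X, if P ∧ Q ∧ σ = σ₀ then g σ else 0) = if P ∧ Q then g σ₀ else 0 := by
  by_cases h : P ∧ Q
  · rw [if_pos h]
    rw [Finset.sum_congr rfl (fun σ _ =>
      show (if P ∧ Q ∧ σ = σ₀ then g σ else 0) = if σ = σ₀ then g σ else 0 by
        by_cases hσ : σ = σ₀ <;> simp [hσ, h.1, h.2]), Finset.sum_ite_eq']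
    simp
  · rw [if_neg h]
    exact Finset.sum_eq_zero fun σ _ => if_neg (by tauto)

private lemma sum_ite_cfg1 {X : Type*} [Fintype X] [DecidableEq X]
    (P : Prop) [Decidable P] (σ₀ : X) (g : X → ℝ) :
    (∑ σ : X, if P ∧ σ = σ₀ then g σ else 0) = if P then g σ₀ else 0 := by
  by_cases h : P
  · rw [if_pos h]
    rw [Finset.sum_congr rfl (fun σ _ =>
      show (if P ∧ σ = σ₀ then g σ else 0) = if σ = σ₀ then g σ else 0 by
        by_cases hσ : σ = σ₀ <;> simp [hσ, h]), Finset.sum_ite_eq']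
    simp
  · rw [if_neg h]
    exact Finset.sum_eq_zero fun σ _ => if_neg (by tauto)

end AuxCombinatorics

section AuxMatrix

variable {ι : Type*} [Fintype ι] [DecidableEq ι]

private def wrd (D E : Matrix ι ι ℝ) (l : List Bool) : Matrix ι ι ℝ :=
  (l.map (fun b => if b then D else E)).prod

private def cF (D E : Matrix ι ι ℝ) (W V : ι → ℝ) (l : List Bool) : ℝ :=
  dotProduct (Matrix.vecMul W (wrd D E l)) V

variable (D E : Matrix ι ι ℝ) (W V : ι → ℝ)

private lemma wrd_append (a b : List Bool) :
    wrd D E (a ++ b) = wrd D E a * wrd D E b := by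
  simp [wrd]

private lemma wrd_cons (x : Bool) (l : List Bool) :
    wrd D E (x :: l) = (if x then D else E) * wrd D E l := by
  simp [wrd]

omit [DecidableEq ι] in
private lemma vecMul_matsmul (r : ℝ) (M : Matrix ι ι ℝ) :
    Matrix.vecMul W (r • M) = r • Matrix.vecMul W M := by
  rw [← Matrix.transpose_transpose M, ← Matrix.transpose_smul, Matrix.vecMul_transpose,
    Matrix.smul_mulVec, Matrix.vecMul_transpose]

private lemma cF_bond {q c : ℝ} (hDE : D * E - q • (E * D) = c • (D + E)) (a b : List Bool) :
    cF D E W V (a ++ true :: false :: b) - q * cF D E W V (a ++ false :: true :: b)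
      = c * (cF D E W V (a ++ true :: b) + cF D E W V (a ++ false :: b)) := by
  have key : wrd D E a * (D * (E * wrd D E b)) - q • (wrd D E a * (E * (D * wrd D E b)))
      = c • (wrd D E a * (D * wrd D E b)) + c • (wrd D E a * (E * wrd D E b)) := by
    calc wrd D E a * (D * (E * wrd D E b)) - q • (wrd D E a * (E * (D * wrd D E b)))
        = wrd D E a * ((D * E - q • (E * D)) * wrd D E b) := by
          rw [Matrix.sub_mul, Matrix.mul_sub, Matrix.smul_mul, Matrix.mul_smul]
          simp [Matrix.mul_assoc]
      _ = wrd D E a * ((c • (D + E)) * wrd D E b) := by rw [hDE]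
      _ = c • (wrd D E a * (D * wrd D E b)) + c • (wrd D E a * (E * wrd D E b)) := by
          rw [Matrix.smul_mul, Matrix.mul_smul, Matrix.add_mul, Matrix.mul_add, smul_add]
  have e1 : cF D E W V (a ++ true :: false :: b)
      = dotProduct (Matrix.vecMul W (wrd D E a * (D * (E * wrd D E b)))) V := by
    simp [cF, wrd_append, wrd_cons]
  have e2 : cF D E W V (a ++ false :: true :: b)
      = dotProduct (Matrix.vecMul W (wrd D E a * (E * (D * wrd D E b)))) V := by
    simp [cF, wrd_append, wrd_cons]
  have e3 : cF D E W V (a ++ true :: b)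
      = dotProduct (Matrix.vecMul W (wrd D E a * (D * wrd D E b))) V := by
    simp [cF, wrd_append, wrd_cons]
  have e4 : cF D E W V (a ++ false :: b)
      = dotProduct (Matrix.vecMul W (wrd D E a * (E * wrd D E b))) V := by
    simp [cF, wrd_append, wrd_cons]
  rw [e1, e2, e3, e4]
  rw [show q * dotProduct (Matrix.vecMul W (wrd D E a * (E * (D * wrd D E b)))) V
      = dotProduct (Matrix.vecMul W (q • (wrd D E a * (E * (D * wrd D E b))))) V by
    rw [vecMul_matsmul, smul_dotProduct, smul_eq_mul]]
  rw [← sub_dotProduct, ← Matrix.vecMul_sub, key]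
  rw [Matrix.vecMul_add, add_dotProduct, vecMul_matsmul, vecMul_matsmul,
    smul_dotProduct, smul_dotProduct, smul_eq_mul, smul_eq_mul]
  ring

private lemma cF_right {β c : ℝ} (hV : β • (Matrix.mulVec D V) = c • V) (a : List Bool) :
    β * cF D E W V (a ++ [true]) = c * cF D E W V a := by
  have e1 : cF D E W V (a ++ [true])
      = dotProduct (Matrix.vecMul (Matrix.vecMul W (wrd D E a)) D) V := by
    simp [cF, wrd_append, wrd_cons, wrd, Matrix.vecMul_vecMul]
  rw [e1, ← Matrix.dotProduct_mulVec]
  rw [show β * dotProduct (Matrix.vecMul W (wrd D E a)) (Matrix.mulVec D V)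
      = dotProduct (Matrix.vecMul W (wrd D E a)) (β • Matrix.mulVec D V) by
    rw [dotProduct_smul, smul_eq_mul]]
  rw [hV, dotProduct_smul, smul_eq_mul]
  rfl

private lemma cF_left {α c : ℝ} (hW : α • (Matrix.vecMul W E) = c • W) (b : List Bool) :
    α * cF D E W V (false :: b) = c * cF D E W V b := by
  have e1 : cF D E W V (false :: b)
      = dotProduct (Matrix.vecMul (Matrix.vecMul W E) (wrd D E b)) V := by
    simp [cF, wrd_cons, Matrix.vecMul_vecMul]
  rw [e1]
  rw [show α * dotProduct (Matrix.vecMul (Matrix.vecMul W E) (wrd D E b)) V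
      = dotProduct (Matrix.vecMul (α • Matrix.vecMul W E) (wrd D E b)) V by
    rw [Matrix.smul_vecMul, smul_dotProduct, smul_eq_mul]]
  rw [hW, Matrix.smul_vecMul, smul_dotProduct, smul_eq_mul]
  rfl

end AuxMatrix

/-- The transition probability `Pr(τ → σ)` (for `σ ≠ τ`) of the open-boundary
ASEP on `n + 1` sites: a particle hops right with probability `1/(n+2)`, hops
left with probability `q/(n+2)`, enters at the first site with probability
`α/(n+2)` when it is empty, and exits at the last site with probability
`β/(n+2)` when it is occupied.  (States are `{0,1}`-configurations, encoded as
functions `Fin (n+1) → Bool` with `true` = particle.) -/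
noncomputable def asepRate (n : ℕ) (α β q : ℝ) (τ σ : Fin (n + 1) → Bool) : ℝ :=
  (1 / (n + 2)) *
    ((∑ i : Fin n, if τ i.castSucc = true ∧ τ i.succ = false ∧
        σ = Function.update (Function.update τ i.castSucc false) i.succ true
        then (1 : ℝ) else 0) +
     (∑ i : Fin n, if τ i.castSucc = false ∧ τ i.succ = true ∧
        σ = Function.update (Function.update τ i.castSucc true) i.succ false
        then q else 0) +
     (if τ 0 = false ∧ σ = Function.update τ 0 true then α else 0) +
     (if τ (Fin.last n) = true ∧ σ = Function.update τ (Fin.last n) false then β else 0))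

private lemma castSucc_ne_succ {n : ℕ} (i : Fin n) : i.castSucc ≠ i.succ :=
  (Fin.castSucc_lt_succ (i := i)).ne

private lemma asepRate_diag (n : ℕ) (α β q : ℝ) (τ : Fin (n + 1) → Bool) :
    asepRate n α β q τ τ = 0 := by
  have t1 : ∀ i : Fin n, ¬(τ i.castSucc = true ∧ τ i.succ = false ∧
      τ = Function.update (Function.update τ i.castSucc false) i.succ true) := by
    rintro i ⟨e1, e2, e3⟩
    obtain ⟨f1, -, -⟩ := upd2_mp (castSucc_ne_succ i) (x := false) (y := true)
      (by simp [e1]) (by simp [e2]) e3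
    rw [f1] at e1; exact Bool.false_ne_true e1
  have t2 : ∀ i : Fin n, ¬(τ i.castSucc = false ∧ τ i.succ = true ∧
      τ = Function.update (Function.update τ i.castSucc true) i.succ false) := by
    rintro i ⟨e1, e2, e3⟩
    obtain ⟨f1, -, -⟩ := upd2_mp (castSucc_ne_succ i) (x := true) (y := false)
      (by simp [e1]) (by simp [e2]) e3
    rw [f1] at e1; simp at e1
  have t3 : ¬(τ 0 = false ∧ τ = Function.update τ 0 true) := by
    rintro ⟨e1, e3⟩
    obtain ⟨f1, -⟩ := upd1_mp (x := true) (by simp [e1]) e3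
    rw [f1] at e1; simp at e1
  have t4 : ¬(τ (Fin.last n) = true ∧ τ = Function.update τ (Fin.last n) false) := by
    rintro ⟨e1, e3⟩
    obtain ⟨f1, -⟩ := upd1_mp (x := false) (by simp [e1]) e3
    rw [f1] at e1; exact Bool.false_ne_true e1
  unfold asepRate
  rw [mul_eq_zero]; right
  rw [Finset.sum_eq_zero (fun i _ => if_neg (t1 i)), Finset.sum_eq_zero (fun i _ => if_neg (t2 i)),
    if_neg t3, if_neg t4]
  norm_num

private lemma ofFn_decomp_two {X : Type*} {n : ℕ} (g τ : Fin (n + 1) → X) (i : Fin n)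
    (hg : ∀ (k : ℕ) (hk : k < n + 1), k ≠ (i : ℕ) → k ≠ (i : ℕ) + 1 → g ⟨k, hk⟩ = τ ⟨k, hk⟩) :
    List.ofFn g = (List.ofFn τ).take (i : ℕ) ++
      g i.castSucc :: g i.succ :: (List.ofFn τ).drop ((i : ℕ) + 2) := by
  have h1 : (i : ℕ) < n + 1 := lt_of_lt_of_le i.isLt (Nat.le_succ n)
  have h2 : (i : ℕ) + 1 < n + 1 := Nat.succ_lt_succ i.isLt
  rw [ofFn_decomp_one g (i : ℕ) h1, drop_succ_decomp g (i : ℕ) h2]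
  rw [show (⟨(i : ℕ), h1⟩ : Fin (n + 1)) = i.castSucc from Fin.ext (by simp),
    show (⟨(i : ℕ) + 1, h2⟩ : Fin (n + 1)) = i.succ from Fin.ext (by simp),
    take_ofFn_congr g τ (i : ℕ) (fun k hk hki => hg k hk (by omega) (by omega)),
    drop_ofFn_congr g τ ((i : ℕ) + 2) (fun k hk hki => hg k hk (by omega) (by omega))]

/-- The Matrix Ansatz of Derrida–Evans–Hakim–Pasquier: if matrices `D`, `E`, a
row vector `W`, a column vector `V` and a constant `c ≠ 0` satisfy
`DE − qED = c(D + E)`, `βD|V⟩ = c|V⟩` and `α⟨W|E = c⟨W|`, with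
`⟨W|(D+E)^(n+1)|V⟩ ≠ 0`, then
`π(τ) = ⟨W| ∏ᵢ (τᵢ D + (1−τᵢ)E) |V⟩ / ⟨W|(D+E)^(n+1)|V⟩` satisfies the global
balance equations of the open-boundary ASEP on `n + 1` sites. -/
theorem matrix_ansatz (n : ℕ) (α β q : ℝ)
    (hα : 0 < α) (hα1 : α < 1) (hβ : 0 < β) (hβ1 : β < 1) (hq : 0 < q) (hq1 : q < 1)
    {ι : Type*} [Fintype ι] [DecidableEq ι]
    (D E : Matrix ι ι ℝ) (W V : ι → ℝ) (c : ℝ) (hc : c ≠ 0)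
    (hDE : D * E - q • (E * D) = c • (D + E))
    (hV : β • (Matrix.mulVec D V) = c • V)
    (hW : α • (Matrix.vecMul W E) = c • W)
    (hZ : dotProduct (Matrix.vecMul W ((D + E) ^ (n + 1))) V ≠ 0)
    (π : (Fin (n + 1) → Bool) → ℝ)
    (hπ : ∀ τ, π τ =
      dotProduct
        (Matrix.vecMul W ((List.ofFn (fun i : Fin (n + 1) =>
          if τ i then D else E)).prod)) V /
      dotProduct (Matrix.vecMul W ((D + E) ^ (n + 1))) V) :
    ∀ τ : Fin (n + 1) → Bool,
      π τ * ∑ σ ∈ univ.filter (fun σ => σ ≠ τ), asepRate n α β q τ σ =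
        ∑ σ ∈ univ.filter (fun σ => σ ≠ τ), π σ * asepRate n α β q σ τ := by
  intro τ
  classical
  have hfnum : ∀ σ : Fin (n + 1) → Bool,
      dotProduct (Matrix.vecMul W ((List.ofFn (fun i : Fin (n + 1) =>
        if σ i then D else E)).prod)) V = cF D E W V (List.ofFn σ) := by
    intro σ
    simp only [cF, wrd, List.map_ofFn]
    rfl
  have hπ' : ∀ σ, π σ = cF D E W V (List.ofFn σ) /
      dotProduct (Matrix.vecMul W ((D + E) ^ (n + 1))) V := by
    intro σ; rw [hπ σ, hfnum σ]
  -- the iff lemmas identifying sources of transitions into τ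
  have hiffR : ∀ (i : Fin n) (σ : Fin (n + 1) → Bool),
      (σ i.castSucc = true ∧ σ i.succ = false ∧
        τ = Function.update (Function.update σ i.castSucc false) i.succ true) ↔
      (τ i.castSucc = false ∧ τ i.succ = true ∧
        σ = Function.update (Function.update τ i.castSucc true) i.succ false) := by
    intro i σ
    have h := upd2_iff (castSucc_ne_succ i) τ σ false true
    simpa using h
  have hiffL : ∀ (i : Fin n) (σ : Fin (n + 1) → Bool),
      (σ i.castSucc = false ∧ σ i.succ = true ∧
        τ = Function.update (Function.update σ i.castSucc true) i.succ false) ↔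
      (τ i.castSucc = true ∧ τ i.succ = false ∧
        σ = Function.update (Function.update τ i.castSucc false) i.succ true) := by
    intro i σ
    have h := upd2_iff (castSucc_ne_succ i) τ σ true false
    simpa using h
  have hiffIn : ∀ σ : Fin (n + 1) → Bool,
      (σ 0 = false ∧ τ = Function.update σ 0 true) ↔
      (τ 0 = true ∧ σ = Function.update τ 0 false) := by
    intro σ
    have h := upd1_iff (0 : Fin (n + 1)) τ σ true
    simpa using h
  have hiffOut : ∀ σ : Fin (n + 1) → Bool,
      (σ (Fin.last n) = true ∧ τ = Function.update σ (Fin.last n) false) ↔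
      (τ (Fin.last n) = false ∧ σ = Function.update τ (Fin.last n) true) := by
    intro σ
    have h := upd1_iff (Fin.last n) τ σ false
    simpa using h
  -- the outflow sum
  have hOUT : (∑ σ ∈ univ.filter (fun σ => σ ≠ τ), asepRate n α β q τ σ)
      = (1 / ((n : ℝ) + 2)) *
        ((∑ i : Fin n, if τ i.castSucc = true ∧ τ i.succ = false then (1 : ℝ) else 0)
          + (∑ i : Fin n, if τ i.castSucc = false ∧ τ i.succ = true then q else 0)
          + (if τ 0 = false then α else 0)
          + (if τ (Fin.last n) = true then β else 0)) := by
    rw [Finset.filter_ne', Finset.sum_erase _ (asepRate_diag n α β q τ)]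
    unfold asepRate
    rw [← Finset.mul_sum]
    congr 1
    rw [Finset.sum_add_distrib, Finset.sum_add_distrib, Finset.sum_add_distrib]
    have p1 : (∑ σ : Fin (n + 1) → Bool, ∑ i : Fin n,
        if τ i.castSucc = true ∧ τ i.succ = false ∧
          σ = Function.update (Function.update τ i.castSucc false) i.succ true
        then (1 : ℝ) else 0)
        = ∑ i : Fin n, if τ i.castSucc = true ∧ τ i.succ = false then (1 : ℝ) else 0 := by
      rw [Finset.sum_comm]
      exact Finset.sum_congr rfl fun i _ => sum_ite_cfg _ _ _ _
    have p2 : (∑ σ : Fin (n + 1) → Bool, ∑ i : Fin n,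
        if τ i.castSucc = false ∧ τ i.succ = true ∧
          σ = Function.update (Function.update τ i.castSucc true) i.succ false
        then q else 0)
        = ∑ i : Fin n, if τ i.castSucc = false ∧ τ i.succ = true then q else 0 := by
      rw [Finset.sum_comm]
      exact Finset.sum_congr rfl fun i _ => sum_ite_cfg _ _ _ _
    have p3 : (∑ σ : Fin (n + 1) → Bool,
        if τ 0 = false ∧ σ = Function.update τ 0 true then α else 0)
        = if τ 0 = false then α else 0 := sum_ite_cfg1 _ _ _
    have p4 : (∑ σ : Fin (n + 1) → Bool,
        if τ (Fin.last n) = true ∧ σ = Function.update τ (Fin.last n) false then β else 0)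
        = if τ (Fin.last n) = true then β else 0 := sum_ite_cfg1 _ _ _
    rw [p1, p2, p3, p4]
  -- the inflow sum
  have hIN : (∑ σ ∈ univ.filter (fun σ => σ ≠ τ),
        cF D E W V (List.ofFn σ) * asepRate n α β q σ τ)
      = (1 / ((n : ℝ) + 2)) *
        ((∑ i : Fin n, if τ i.castSucc = false ∧ τ i.succ = true then
            cF D E W V (List.ofFn (Function.update (Function.update τ i.castSucc true) i.succ false)) else 0)
          + (∑ i : Fin n, if τ i.castSucc = true ∧ τ i.succ = false then
            cF D E W V (List.ofFn (Function.update (Function.update τ i.castSucc false) i.succ true)) * q else 0)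
          + (if τ 0 = true then cF D E W V (List.ofFn (Function.update τ 0 false)) * α else 0)
          + (if τ (Fin.last n) = false then cF D E W V (List.ofFn (Function.update τ (Fin.last n) true)) * β else 0)) := by
    rw [Finset.filter_ne', Finset.sum_erase _ (by rw [asepRate_diag]; exact mul_zero _)]
    have step : ∀ σ : Fin (n + 1) → Bool,
        cF D E W V (List.ofFn σ) * asepRate n α β q σ τ
        = (1 / ((n : ℝ) + 2)) *
          ((∑ i : Fin n, if τ i.castSucc = false ∧ τ i.succ = true ∧
              σ = Function.update (Function.update τ i.castSucc true) i.succ false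
              then cF D E W V (List.ofFn σ) else 0)
            + (∑ i : Fin n, if τ i.castSucc = true ∧ τ i.succ = false ∧
              σ = Function.update (Function.update τ i.castSucc false) i.succ true
              then cF D E W V (List.ofFn σ) * q else 0)
            + (if τ 0 = true ∧ σ = Function.update τ 0 false
              then cF D E W V (List.ofFn σ) * α else 0)
            + (if τ (Fin.last n) = false ∧ σ = Function.update τ (Fin.last n) true
              then cF D E W V (List.ofFn σ) * β else 0)) := by
      intro σ
      unfold asepRate
      rw [mul_left_comm]
      congr 1
      rw [mul_add, mul_add, mul_add]
      congr 1
      · congr 1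
        · congr 1
          · rw [Finset.mul_sum]
            exact Finset.sum_congr rfl fun i _ => by
              rw [mul_ite, mul_zero, mul_one]
              exact if_congr (hiffR i σ) rfl rfl
          · rw [Finset.mul_sum]
            exact Finset.sum_congr rfl fun i _ => by
              rw [mul_ite, mul_zero]
              exact if_congr (hiffL i σ) rfl rfl
        · rw [mul_ite, mul_zero]
          exact if_congr (hiffIn σ) rfl rfl
      · rw [mul_ite, mul_zero]
        exact if_congr (hiffOut σ) rfl rfl
    rw [Finset.sum_congr rfl fun σ _ => step σ, ← Finset.mul_sum]
    congr 1
    rw [Finset.sum_add_distrib, Finset.sum_add_distrib, Finset.sum_add_distrib]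
    have q1 : (∑ σ : Fin (n + 1) → Bool, ∑ i : Fin n,
        if τ i.castSucc = false ∧ τ i.succ = true ∧
          σ = Function.update (Function.update τ i.castSucc true) i.succ false
        then cF D E W V (List.ofFn σ) else 0)
        = ∑ i : Fin n, if τ i.castSucc = false ∧ τ i.succ = true then
            cF D E W V (List.ofFn (Function.update (Function.update τ i.castSucc true) i.succ false)) else 0 := by
      rw [Finset.sum_comm]
      exact Finset.sum_congr rfl fun i _ => sum_ite_cfg _ _ _ _
    have q2 : (∑ σ : Fin (n + 1) → Bool, ∑ i : Fin n,
        if τ i.castSucc = true ∧ τ i.succ = false ∧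
          σ = Function.update (Function.update τ i.castSucc false) i.succ true
        then cF D E W V (List.ofFn σ) * q else 0)
        = ∑ i : Fin n, if τ i.castSucc = true ∧ τ i.succ = false then
            cF D E W V (List.ofFn (Function.update (Function.update τ i.castSucc false) i.succ true)) * q else 0 := by
      rw [Finset.sum_comm]
      exact Finset.sum_congr rfl fun i _ => sum_ite_cfg _ _ _ _
    have q3 : (∑ σ : Fin (n + 1) → Bool,
        if τ 0 = true ∧ σ = Function.update τ 0 false
        then cF D E W V (List.ofFn σ) * α else 0)
        = if τ 0 = true then cF D E W V (List.ofFn (Function.update τ 0 false)) * α else 0 :=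
      sum_ite_cfg1 _ _ _
    have q4 : (∑ σ : Fin (n + 1) → Bool,
        if τ (Fin.last n) = false ∧ σ = Function.update τ (Fin.last n) true
        then cF D E W V (List.ofFn σ) * β else 0)
        = if τ (Fin.last n) = false then
            cF D E W V (List.ofFn (Function.update τ (Fin.last n) true)) * β else 0 :=
      sum_ite_cfg1 _ _ _
    rw [q1, q2, q3, q4]
    -- list decompositions, at the level of cF
  have eT : ∀ i : Fin n, cF D E W V (List.ofFn τ)
      = cF D E W V ((List.ofFn τ).take (i : ℕ) ++
          τ i.castSucc :: τ i.succ :: (List.ofFn τ).drop ((i : ℕ) + 1 + 1)) :=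
    fun i => congrArg _ (ofFn_decomp_two τ τ i (fun _ _ _ _ => rfl))
  have eR : ∀ i : Fin n,
      cF D E W V (List.ofFn (Function.update (Function.update τ i.castSucc true) i.succ false))
      = cF D E W V ((List.ofFn τ).take (i : ℕ) ++
          true :: false :: (List.ofFn τ).drop ((i : ℕ) + 1 + 1)) := by
    intro i
    have hd := ofFn_decomp_two (Function.update (Function.update τ i.castSucc true) i.succ false) τ i
      (fun k hk hk1 hk2 => by
        have hks : (⟨k, hk⟩ : Fin (n + 1)) ≠ i.succ := by simp [Fin.ext_iff]; omega
        have hkc : (⟨k, hk⟩ : Fin (n + 1)) ≠ i.castSucc := by simp [Fin.ext_iff]; omega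
        rw [Function.update_of_ne hks, Function.update_of_ne hkc])
    rw [Function.update_of_ne (castSucc_ne_succ i), Function.update_self,
      Function.update_self] at hd
    exact congrArg _ hd
  have eL : ∀ i : Fin n,
      cF D E W V (List.ofFn (Function.update (Function.update τ i.castSucc false) i.succ true))
      = cF D E W V ((List.ofFn τ).take (i : ℕ) ++
          false :: true :: (List.ofFn τ).drop ((i : ℕ) + 1 + 1)) := by
    intro i
    have hd := ofFn_decomp_two (Function.update (Function.update τ i.castSucc false) i.succ true) τ i
      (fun k hk hk1 hk2 => by
        have hks : (⟨k, hk⟩ : Fin (n + 1)) ≠ i.succ := by simp [Fin.ext_iff]; omega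
        have hkc : (⟨k, hk⟩ : Fin (n + 1)) ≠ i.castSucc := by simp [Fin.ext_iff]; omega
        rw [Function.update_of_ne hks, Function.update_of_ne hkc])
    rw [Function.update_of_ne (castSucc_ne_succ i), Function.update_self,
      Function.update_self] at hd
    exact congrArg _ hd
  have edrop : ∀ i : Fin n, (List.ofFn τ).drop ((i : ℕ) + 1)
      = τ i.succ :: (List.ofFn τ).drop ((i : ℕ) + 1 + 1) := by
    intro i
    have h2 : (i : ℕ) + 1 < n + 1 := Nat.succ_lt_succ i.isLt
    rw [drop_succ_decomp τ (i : ℕ) h2,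
      show (⟨(i : ℕ) + 1, h2⟩ : Fin (n + 1)) = i.succ from Fin.ext (by simp)]
  have etake : ∀ i : Fin n, (List.ofFn τ).take ((i : ℕ) + 1)
      = (List.ofFn τ).take (i : ℕ) ++ [τ i.castSucc] := by
    intro i
    have h1 : (i : ℕ) < (List.ofFn τ).length := by
      rw [List.length_ofFn]; exact lt_of_lt_of_le i.isLt (Nat.le_succ n)
    rw [take_succ_eq _ _ h1]
    congr 1
    rw [List.getElem_ofFn]
    congr 1
  have eIn : cF D E W V (List.ofFn (Function.update τ 0 false))
      = cF D E W V (false :: (List.ofFn τ).drop 1) := by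
    have hd := ofFn_decomp_one (Function.update τ 0 false) 0 (Nat.succ_pos n)
    rw [show (⟨0, Nat.succ_pos n⟩ : Fin (n + 1)) = 0 from Fin.ext (by simp)] at hd
    rw [Function.update_self] at hd
    rw [drop_ofFn_congr (Function.update τ 0 false) τ 1
      (fun k hk hk1 => Function.update_of_ne (by simp [Fin.ext_iff]; omega) _ _)] at hd
    simp only [List.take_zero, List.nil_append] at hd
    exact congrArg _ hd
  have eT0 : cF D E W V (List.ofFn τ) = cF D E W V (τ 0 :: (List.ofFn τ).drop 1) := by
    have hd := ofFn_decomp_one τ 0 (Nat.succ_pos n)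
    rw [show (⟨0, Nat.succ_pos n⟩ : Fin (n + 1)) = 0 from Fin.ext (by simp)] at hd
    simp only [List.take_zero, List.nil_append] at hd
    exact congrArg _ hd
  have hdropnil : (List.ofFn τ).drop (n + 1) = ([] : List Bool) := by
    apply List.drop_eq_nil_of_le; simp
  have eOut : cF D E W V (List.ofFn (Function.update τ (Fin.last n) true))
      = cF D E W V ((List.ofFn τ).take n ++ [true]) := by
    have hd := ofFn_decomp_one (Function.update τ (Fin.last n) true) n (Nat.lt_succ_self n)
    rw [show (⟨n, Nat.lt_succ_self n⟩ : Fin (n + 1)) = Fin.last n from Fin.ext (by simp)] at hd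
    rw [Function.update_self] at hd
    rw [take_ofFn_congr (Function.update τ (Fin.last n) true) τ n
      (fun k hk hkn => Function.update_of_ne (by simp [Fin.ext_iff]; omega) _ _)] at hd
    rw [show (List.ofFn (Function.update τ (Fin.last n) true)).drop (n + 1) = ([] : List Bool)
      from by apply List.drop_eq_nil_of_le; simp] at hd
    exact congrArg _ hd
  have eTlast : cF D E W V (List.ofFn τ)
      = cF D E W V ((List.ofFn τ).take n ++ [τ (Fin.last n)]) := by
    have hd := ofFn_decomp_one τ n (Nat.lt_succ_self n)
    rw [show (⟨n, Nat.lt_succ_self n⟩ : Fin (n + 1)) = Fin.last n from Fin.ext (by simp)] at hd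
    rw [hdropnil] at hd
    exact congrArg _ hd
  -- the telescoping function
  set φ : ℕ → ℝ := fun k =>
    (if h : k < n + 1 then (if τ ⟨k, h⟩ then (1 : ℝ) else -1) else 0) *
      (c * cF D E W V ((List.ofFn τ).take k ++ (List.ofFn τ).drop (k + 1))) with hφ
  have htel : ∑ i : Fin n, (φ ((i : ℕ) + 1) - φ (i : ℕ)) = φ n - φ 0 := by
    rw [Fin.sum_univ_eq_sum_range (fun k => φ (k + 1) - φ k) n]
    exact Finset.sum_range_sub (fun k => φ k) n
  have hbond : ∀ i : Fin n,
      (if τ i.castSucc = false ∧ τ i.succ = true then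
          cF D E W V (List.ofFn (Function.update (Function.update τ i.castSucc true) i.succ false)) else 0)
        + (if τ i.castSucc = true ∧ τ i.succ = false then
          cF D E W V (List.ofFn (Function.update (Function.update τ i.castSucc false) i.succ true)) * q else 0)
        - ((if τ i.castSucc = true ∧ τ i.succ = false then cF D E W V (List.ofFn τ) * 1 else 0)
          + (if τ i.castSucc = false ∧ τ i.succ = true then cF D E W V (List.ofFn τ) * q else 0))
      = φ ((i : ℕ) + 1) - φ (i : ℕ) := by
    intro i
    have hv1 : (i : ℕ) < n + 1 := lt_of_lt_of_le i.isLt (Nat.le_succ n)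
    have hv2 : (i : ℕ) + 1 < n + 1 := Nat.succ_lt_succ i.isLt
    simp only [hφ]
    rw [dif_pos hv2, dif_pos hv1]
    rw [show (⟨(i : ℕ) + 1, hv2⟩ : Fin (n + 1)) = i.succ from Fin.ext (by simp),
      show (⟨(i : ℕ), hv1⟩ : Fin (n + 1)) = i.castSucc from Fin.ext (by simp)]
    rw [eR i, eL i, eT i, edrop i, etake i]
    set AA := (List.ofFn τ).take (i : ℕ) with hAA
    set BB := (List.ofFn τ).drop ((i : ℕ) + 1 + 1) with hBB
    cases hcs : τ i.castSucc <;> cases hsc : τ i.succ <;>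
      simp only [eq_self_iff_true, true_and, and_true, Bool.true_eq_false, Bool.false_eq_true, false_and, and_false, and_self, if_true, if_false, ite_true, ite_false, mul_one, one_mul, neg_mul, neg_neg, sub_zero, zero_sub, add_zero, zero_add, List.append_assoc, List.singleton_append]
    · ring
    · linear_combination (cF_bond D E W V hDE AA BB)
    · linear_combination (-(cF_bond D E W V hDE AA BB))
    · ring
  have hleft :
      (if τ 0 = true then cF D E W V (List.ofFn (Function.update τ 0 false)) * α else 0)
        - (if τ 0 = false then cF D E W V (List.ofFn τ) * α else 0)
      = φ 0 := by
    simp only [hφ]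
    rw [dif_pos (Nat.succ_pos n)]
    rw [show (⟨0, Nat.succ_pos n⟩ : Fin (n + 1)) = 0 from Fin.ext (by simp)]
    rw [eIn, eT0]
    simp only [List.take_zero, List.nil_append]
    cases h0 : τ 0 <;> simp only [eq_self_iff_true, true_and, and_true, Bool.true_eq_false, Bool.false_eq_true, false_and, and_false, and_self, if_true, if_false, ite_true, ite_false, mul_one, one_mul, neg_mul, neg_neg, sub_zero, zero_sub, add_zero, zero_add, List.append_assoc, List.singleton_append]
    · linear_combination (-(cF_left D E W V hW ((List.ofFn τ).drop 1)))
    · linear_combination (cF_left D E W V hW ((List.ofFn τ).drop 1))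
  have hright :
      (if τ (Fin.last n) = false then
          cF D E W V (List.ofFn (Function.update τ (Fin.last n) true)) * β else 0)
        - (if τ (Fin.last n) = true then cF D E W V (List.ofFn τ) * β else 0)
      = -φ n := by
    simp only [hφ]
    rw [dif_pos (Nat.lt_succ_self n)]
    rw [show (⟨n, Nat.lt_succ_self n⟩ : Fin (n + 1)) = Fin.last n from Fin.ext (by simp)]
    rw [eOut, eTlast, hdropnil, List.append_nil]
    cases hl : τ (Fin.last n) <;> simp only [eq_self_iff_true, true_and, and_true, Bool.true_eq_false, Bool.false_eq_true, false_and, and_false, and_self, if_true, if_false, ite_true, ite_false, mul_one, one_mul, neg_mul, neg_neg, sub_zero, zero_sub, add_zero, zero_add, List.append_assoc, List.singleton_append]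
    · linear_combination (cF_right D E W V hV ((List.ofFn τ).take n))
    · linear_combination (-(cF_right D E W V hV ((List.ofFn τ).take n)))
  have ebond :
      (∑ i : Fin n, if τ i.castSucc = false ∧ τ i.succ = true then
          cF D E W V (List.ofFn (Function.update (Function.update τ i.castSucc true) i.succ false)) else 0)
        + (∑ i : Fin n, if τ i.castSucc = true ∧ τ i.succ = false then
          cF D E W V (List.ofFn (Function.update (Function.update τ i.castSucc false) i.succ true)) * q else 0)
        - ((∑ i : Fin n, if τ i.castSucc = true ∧ τ i.succ = false then
            cF D E W V (List.ofFn τ) * 1 else 0)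
          + (∑ i : Fin n, if τ i.castSucc = false ∧ τ i.succ = true then
            cF D E W V (List.ofFn τ) * q else 0))
      = φ n - φ 0 := by
    rw [← Finset.sum_add_distrib, ← Finset.sum_add_distrib, ← Finset.sum_sub_distrib]
    rw [Finset.sum_congr rfl fun i _ => hbond i]
    exact htel
  have master :
      ((∑ i : Fin n, if τ i.castSucc = false ∧ τ i.succ = true then
          cF D E W V (List.ofFn (Function.update (Function.update τ i.castSucc true) i.succ false)) else 0)
        + (∑ i : Fin n, if τ i.castSucc = true ∧ τ i.succ = false then
          cF D E W V (List.ofFn (Function.update (Function.update τ i.castSucc false) i.succ true)) * q else 0)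
        + (if τ 0 = true then cF D E W V (List.ofFn (Function.update τ 0 false)) * α else 0)
        + (if τ (Fin.last n) = false then
            cF D E W V (List.ofFn (Function.update τ (Fin.last n) true)) * β else 0))
      = cF D E W V (List.ofFn τ) *
        ((∑ i : Fin n, if τ i.castSucc = true ∧ τ i.succ = false then (1 : ℝ) else 0)
          + (∑ i : Fin n, if τ i.castSucc = false ∧ τ i.succ = true then q else 0)
          + (if τ 0 = false then α else 0)
          + (if τ (Fin.last n) = true then β else 0)) := by
    have r1 : cF D E W V (List.ofFn τ) *
        (∑ i : Fin n, if τ i.castSucc = true ∧ τ i.succ = false then (1 : ℝ) else 0)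
        = ∑ i : Fin n, if τ i.castSucc = true ∧ τ i.succ = false then
            cF D E W V (List.ofFn τ) * 1 else 0 := by
      rw [Finset.mul_sum]
      exact Finset.sum_congr rfl fun i _ => by rw [mul_ite, mul_zero]
    have r2 : cF D E W V (List.ofFn τ) *
        (∑ i : Fin n, if τ i.castSucc = false ∧ τ i.succ = true then q else 0)
        = ∑ i : Fin n, if τ i.castSucc = false ∧ τ i.succ = true then
            cF D E W V (List.ofFn τ) * q else 0 := by
      rw [Finset.mul_sum]
      exact Finset.sum_congr rfl fun i _ => by rw [mul_ite, mul_zero]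
    have r3 : cF D E W V (List.ofFn τ) * (if τ 0 = false then α else 0)
        = if τ 0 = false then cF D E W V (List.ofFn τ) * α else 0 := by
      rw [mul_ite, mul_zero]
    have r4 : cF D E W V (List.ofFn τ) * (if τ (Fin.last n) = true then β else 0)
        = if τ (Fin.last n) = true then cF D E W V (List.ofFn τ) * β else 0 := by
      rw [mul_ite, mul_zero]
    rw [mul_add, mul_add, mul_add, r1, r2, r3, r4]
    linear_combination ebond + hleft + hright
  have key : cF D E W V (List.ofFn τ) *
        (∑ σ ∈ univ.filter (fun σ => σ ≠ τ), asepRate n α β q τ σ)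
      = ∑ σ ∈ univ.filter (fun σ => σ ≠ τ),
          cF D E W V (List.ofFn σ) * asepRate n α β q σ τ := by
    rw [hOUT, hIN]
    linear_combination (-(1 / ((n : ℝ) + 2))) * master
  rw [hπ' τ, div_mul_eq_mul_div, key, Finset.sum_div]
  exact Finset.sum_congr rfl fun σ _ => (by rw [hπ' σ, div_mul_eq_mul_div])
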